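/- arXiv:2506.21727 — 7 statements merged into one kernel-verified Lean document; each statement's English description precedes it below -/
import Mathlib

section
/- For every nonnegative integer c there exists a binary identical MDFA instance with two agents and at most 2(4c² + 1) dimensions (and the same number of items) that admits no weak sEFc allocation. Concretely, let r be the smallest power of two with r ≥ 4c² + 1, let H be an r × r Hadamard matrix (a {−1,+1}-matrix with mutually orthogonal rows), and set H* = (H + J)/2 where J is the all-ones matrix; the instance with r items, r dimensions, and identical valuations v_{jk} = H*_{jk} ∈ {0,1} admits no weak sEFc allocation. -/
/-- An allocation: a partition of the set of items among `n` agents. -/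
def IsAllocation {n : ℕ} {Item : Type*} [DecidableEq Item]
    (A : Fin n → Finset Item) : Prop :=
  (∀ g : Item, ∃ i : Fin n, g ∈ A i) ∧
  ∀ i i' : Fin n, i ≠ i' → Disjoint (A i) (A i')

/-- Weak simultaneous envy-freeness up to `c` goods: for every pair of distinct
agents and every dimension, envy in that dimension can be eliminated by removing
at most `c` items (possibly different ones per dimension). -/
def WeakSEF {n : ℕ} {Item Dim : Type*} [DecidableEq Item]
    (v : Fin n → Item → Dim → ℕ) (A : Fin n → Finset Item) (c : ℕ) : Prop :=
  ∀ i i' : Fin n, i ≠ i' → ∀ k : Dim,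
    ∃ X : Finset Item, X ⊆ A i' ∧ X.card ≤ c ∧
      ∑ g ∈ A i' \ X, v i g k ≤ ∑ g ∈ A i, v i g k

/-- Strong simultaneous envy-freeness up to `c` goods: for every pair of distinct
agents there is a single set of at most `c` items whose removal eliminates envy
simultaneously in every dimension. -/
def StrongSEF {n : ℕ} {Item Dim : Type*} [DecidableEq Item]
    (v : Fin n → Item → Dim → ℕ) (A : Fin n → Finset Item) (c : ℕ) : Prop :=
  ∀ i i' : Fin n, i ≠ i' → ∃ X : Finset Item, X ⊆ A i' ∧ X.card ≤ c ∧
    ∀ k : Dim, ∑ g ∈ A i' \ X, v i g k ≤ ∑ g ∈ A i, v i g k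

namespace SEFAux

lemma zmod2 (x : ZMod 2) : x = 0 ∨ x = 1 := by revert x; decide

def chi {t : ℕ} (a b : Fin t → ZMod 2) : ℤ :=
  if (∑ i, a i * b i) = 0 then 1 else -1

lemma chi_comm {t : ℕ} (a b : Fin t → ZMod 2) : chi a b = chi b a := by
  unfold chi
  rw [Finset.sum_congr rfl fun i _ => mul_comm (a i) (b i)]

lemma chi_mul {t : ℕ} (a b b' : Fin t → ZMod 2) :
    chi a b * chi a b' = chi a (b + b') := by
  unfold chi
  have h : (∑ i, a i * (b + b') i) = (∑ i, a i * b i) + (∑ i, a i * b' i) := by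
    rw [← Finset.sum_add_distrib]
    exact Finset.sum_congr rfl fun i _ => by simp [mul_add]
  rw [h]
  rcases zmod2 (∑ i, a i * b i) with h1 | h1 <;>
    rcases zmod2 (∑ i, a i * b' i) with h2 | h2 <;>
      rw [h1, h2] <;>
      simp [show (1 : ZMod 2) + 1 = 0 by decide, show (1 : ZMod 2) ≠ 0 by decide]

lemma pi_add_eq_zero {t : ℕ} (b b' : Fin t → ZMod 2) : b + b' = 0 ↔ b = b' := by
  have h2 : ∀ x y : ZMod 2, x + y = 0 ↔ x = y := by decide
  constructor
  · intro h; funext i; exact (h2 _ _).mp (congrFun h i)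
  · rintro rfl; funext i; exact (h2 _ _).mpr rfl

lemma sum_chi {t : ℕ} (b : Fin t → ZMod 2) :
    ∑ a : Fin t → ZMod 2, chi a b = if b = 0 then (2 ^ t : ℤ) else 0 := by
  by_cases hb : b = 0
  · subst hb
    have h1 : ∀ a : Fin t → ZMod 2, chi a 0 = 1 := fun a => by simp [chi]
    simp [h1, Finset.sum_const, Fintype.card_fun]
  · rw [if_neg hb]
    obtain ⟨i₀, hi₀⟩ : ∃ i, b i ≠ 0 := by
      by_contra h; push_neg at h; exact hb (funext fun i => h i)
    have hbi : b i₀ = 1 := (zmod2 (b i₀)).resolve_left hi₀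
    set δ : Fin t → ZMod 2 := fun i => if i = i₀ then 1 else 0 with hδ
    have hδb : chi δ b = -1 := by
      unfold chi
      have h3 : (∑ i, δ i * b i) = b i₀ := by
        simp [hδ, ite_mul]
      rw [h3, hbi]
      simp [show (1 : ZMod 2) ≠ 0 by decide]
    have key : ∀ a, chi (δ + a) b = - chi a b := by
      intro a
      have h1 : chi (δ + a) b = chi δ b * chi a b := by
        rw [chi_comm, ← chi_mul b δ a, chi_comm b δ, chi_comm b a]
      rw [h1, hδb]; ring
    have heq : ∑ a : Fin t → ZMod 2, chi (δ + a) b = ∑ a : Fin t → ZMod 2, chi a b :=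
      Fintype.sum_equiv (Equiv.addLeft δ) _ _ (fun a => rfl)
    rw [Finset.sum_congr rfl fun a _ => key a, Finset.sum_neg_distrib] at heq
    linarith

noncomputable def eqv (t : ℕ) : Fin (2 ^ t) ≃ (Fin t → ZMod 2) :=
  (Fintype.equivFinOfCardEq (by simp [Fintype.card_fun])).symm

noncomputable def V (t : ℕ) (j k : Fin (2 ^ t)) : ℕ :=
  if (∑ i, eqv t j i * eqv t k i : ZMod 2) = 0 then 1 else 0

lemma V_le_one (t : ℕ) (j k : Fin (2 ^ t)) : V t j k ≤ 1 := by
  unfold V; split_ifs <;> norm_num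

lemma two_V (t : ℕ) (j k : Fin (2 ^ t)) :
    (2 : ℤ) * (V t j k : ℕ) = 1 + chi (eqv t j) (eqv t k) := by
  unfold V chi; split_ifs <;> norm_num

lemma no_alloc (c t : ℕ) (hrt : 4 * c ^ 2 + 1 ≤ 2 ^ t)
    (A : Fin 2 → Finset (Fin (2 ^ t))) (hA : IsAllocation A) :
    ¬ WeakSEF (fun (_ : Fin 2) => V t) A c := by
  intro hW
  set R : ℤ := (2 ^ t : ℤ) with hR
  have hRge : (4 * (c : ℤ) ^ 2 + 1) ≤ R := by
    rw [hR]; exact_mod_cast hrt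
  have hRpos : 0 < R := by positivity
  -- partition facts
  have hdisj : Disjoint (A 0) (A 1) := hA.2 0 1 (by decide)
  have hmem : ∀ j, j ∈ A 0 ∨ j ∈ A 1 := by
    intro j; obtain ⟨i, hi⟩ := hA.1 j
    fin_cases i
    · exact Or.inl hi
    · exact Or.inr hi
  set x : Fin (2 ^ t) → ℤ := fun j => if j ∈ A 0 then 1 else -1 with hx
  have hx1 : ∀ j, x j * x j = 1 := by
    intro j; rw [hx]; dsimp only; split_ifs <;> norm_num
  -- bounds from WeakSEF
  have hbN : ∀ k : Fin (2 ^ t),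
      (∑ j ∈ A 1, V t j k) ≤ (∑ j ∈ A 0, V t j k) + c ∧
      (∑ j ∈ A 0, V t j k) ≤ (∑ j ∈ A 1, V t j k) + c := by
    intro k
    constructor
    · obtain ⟨X, hX, hXc, hle⟩ := hW 0 1 (by decide) k
      have hle' : ∑ g ∈ A 1 \ X, V t g k ≤ ∑ g ∈ A 0, V t g k := hle
      have h1 : ∑ g ∈ A 1 \ X, V t g k + ∑ g ∈ X, V t g k = ∑ g ∈ A 1, V t g k :=
        Finset.sum_sdiff hX
      have h2 : ∑ g ∈ X, V t g k ≤ X.card := by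
        calc ∑ g ∈ X, V t g k ≤ ∑ _g ∈ X, 1 :=
              Finset.sum_le_sum fun g _ => V_le_one t g k
          _ = X.card := by simp
      omega
    · obtain ⟨X, hX, hXc, hle⟩ := hW 1 0 (by decide) k
      have hle' : ∑ g ∈ A 0 \ X, V t g k ≤ ∑ g ∈ A 1, V t g k := hle
      have h1 : ∑ g ∈ A 0 \ X, V t g k + ∑ g ∈ X, V t g k = ∑ g ∈ A 0, V t g k :=
        Finset.sum_sdiff hX
      have h2 : ∑ g ∈ X, V t g k ≤ X.card := by
        calc ∑ g ∈ X, V t g k ≤ ∑ _g ∈ X, 1 :=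
              Finset.sum_le_sum fun g _ => V_le_one t g k
          _ = X.card := by simp
      omega
  set D : Fin (2 ^ t) → ℤ :=
    fun k => (∑ j ∈ A 0, (V t j k : ℤ)) - (∑ j ∈ A 1, (V t j k : ℤ)) with hD
  have hDbound : ∀ k, -(c : ℤ) ≤ D k ∧ D k ≤ c := by
    intro k
    obtain ⟨h1, h2⟩ := hbN k
    have h1' : ((∑ j ∈ A 1, V t j k : ℕ) : ℤ) ≤ ((∑ j ∈ A 0, V t j k : ℕ) : ℤ) + c := by
      exact_mod_cast h1
    have h2' : ((∑ j ∈ A 0, V t j k : ℕ) : ℤ) ≤ ((∑ j ∈ A 1, V t j k : ℕ) : ℤ) + c := by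
      exact_mod_cast h2
    push_cast at h1' h2'
    rw [hD]; dsimp only; constructor <;> linarith
  -- D as a signed sum
  have huniv : A 0 ∪ A 1 = Finset.univ :=
    Finset.eq_univ_of_forall fun j => Finset.mem_union.mpr (hmem j)
  have hd : ∀ k, D k = ∑ j : Fin (2 ^ t), x j * (V t j k : ℤ) := by
    intro k
    have h0 : ∑ j ∈ A 0, x j * (V t j k : ℤ) = ∑ j ∈ A 0, (V t j k : ℤ) :=
      Finset.sum_congr rfl fun j hj => by rw [hx]; dsimp only; rw [if_pos hj, one_mul]
    have h1 : ∑ j ∈ A 1, x j * (V t j k : ℤ) = -∑ j ∈ A 1, (V t j k : ℤ) := by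
      rw [← Finset.sum_neg_distrib]
      refine Finset.sum_congr rfl fun j hj => ?_
      rw [hx]; dsimp only
      rw [if_neg (Finset.disjoint_right.mp hdisj hj)]; ring
    calc D k = ∑ j ∈ A 0, x j * (V t j k : ℤ) + ∑ j ∈ A 1, x j * (V t j k : ℤ) := by
          rw [h0, h1, hD]; ring
      _ = ∑ j ∈ A 0 ∪ A 1, x j * (V t j k : ℤ) := (Finset.sum_union hdisj).symm
      _ = ∑ j : Fin (2 ^ t), x j * (V t j k : ℤ) := by rw [huniv]
  set s : ℤ := ∑ j : Fin (2 ^ t), x j with hs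
  set T : Fin (2 ^ t) → ℤ :=
    fun k => ∑ j : Fin (2 ^ t), x j * chi (eqv t j) (eqv t k) with hT
  -- 2 D k = s + T k
  have h2D : ∀ k, 2 * D k = s + T k := by
    intro k
    rw [hd k, Finset.mul_sum]
    rw [Finset.sum_congr rfl fun j _ => show 2 * (x j * (V t j k : ℤ))
        = x j + x j * chi (eqv t j) (eqv t k) by
      rw [mul_left_comm, two_V]; ring]
    rw [Finset.sum_add_distrib, hs, hT]
  -- orthogonality
  have horth : ∀ j j' : Fin (2 ^ t),
      ∑ k : Fin (2 ^ t), chi (eqv t j) (eqv t k) * chi (eqv t j') (eqv t k)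
        = if j = j' then R else 0 := by
    intro j j'
    have h1 : ∀ k : Fin (2 ^ t), chi (eqv t j) (eqv t k) * chi (eqv t j') (eqv t k)
        = chi (eqv t k) (eqv t j + eqv t j') := fun k => by
      rw [chi_comm (eqv t j), chi_comm (eqv t j'), chi_mul]
    rw [Finset.sum_congr rfl fun k _ => h1 k]
    rw [Fintype.sum_equiv (eqv t) _ (fun a => chi a (eqv t j + eqv t j')) (fun k => rfl)]
    rw [sum_chi]
    by_cases hjj : j = j'
    · subst hjj
      rw [if_pos ((pi_add_eq_zero _ _).mpr rfl), if_pos rfl, hR]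
    · rw [if_neg, if_neg hjj]
      intro hc
      exact hjj ((eqv t).injective ((pi_add_eq_zero _ _).mp hc))
  -- sum of T k squared
  have hT2 : ∑ k : Fin (2 ^ t), T k * T k = R * R := by
    have expand : ∀ k, T k * T k = ∑ j, ∑ j', (x j * x j') *
        (chi (eqv t j) (eqv t k) * chi (eqv t j') (eqv t k)) := by
      intro k
      rw [hT]; dsimp only
      rw [Finset.sum_mul_sum]
      exact Finset.sum_congr rfl fun j _ => Finset.sum_congr rfl fun j' _ => by ring
    rw [Finset.sum_congr rfl fun k _ => expand k]
    rw [Finset.sum_comm]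
    rw [Finset.sum_congr rfl fun j (_ : j ∈ Finset.univ) => Finset.sum_comm]
    have hinner : ∀ j j' : Fin (2 ^ t),
        ∑ k : Fin (2 ^ t), (x j * x j') *
          (chi (eqv t j) (eqv t k) * chi (eqv t j') (eqv t k))
        = if j = j' then x j * x j' * R else 0 := by
      intro j j'
      rw [← Finset.mul_sum, horth]
      split_ifs <;> ring
    rw [Finset.sum_congr rfl fun j _ => Finset.sum_congr rfl fun j' _ => hinner j j']
    rw [Finset.sum_congr rfl fun j (_ : j ∈ Finset.univ) => Finset.sum_ite_eq Finset.univ j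
      (fun j' => x j * x j' * R)]
    simp only [Finset.mem_univ, if_true]
    rw [Finset.sum_congr rfl fun j _ => by rw [hx1 j, one_mul]]
    rw [Finset.sum_const, Finset.card_univ, Fintype.card_fin, hR]
    push_cast; ring
  -- sum of T k
  set j₀ : Fin (2 ^ t) := (eqv t).symm 0 with hj₀
  have hTsum : ∑ k : Fin (2 ^ t), T k = R * x j₀ := by
    rw [hT]; dsimp only
    rw [Finset.sum_comm]
    have hcol : ∀ j : Fin (2 ^ t),
        ∑ k : Fin (2 ^ t), x j * chi (eqv t j) (eqv t k)
          = if j = j₀ then x j * R else 0 := by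
      intro j
      rw [← Finset.mul_sum]
      rw [Finset.sum_congr rfl fun k _ => chi_comm (eqv t j) (eqv t k)]
      rw [Fintype.sum_equiv (eqv t) _ (fun a => chi a (eqv t j)) (fun k => rfl)]
      rw [sum_chi]
      by_cases hj : j = j₀
      · subst hj
        rw [if_pos, if_pos rfl, hR]
        rw [hj₀, Equiv.apply_symm_apply]
      · rw [if_neg, if_neg hj, mul_zero]
        intro hc
        exact hj (by rw [hj₀, ← hc, Equiv.symm_apply_apply])
    rw [Finset.sum_congr rfl fun j _ => hcol j]
    rw [Finset.sum_ite_eq' Finset.univ j₀ (fun j => x j * R)]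
    simp only [Finset.mem_univ, if_true]
    ring
  -- the all-ones dimension gives |s| ≤ c
  set k₀ : Fin (2 ^ t) := (eqv t).symm 0 with hk₀
  have hTk₀ : T k₀ = s := by
    rw [hT, hs]; dsimp only
    refine Finset.sum_congr rfl fun j _ => ?_
    have : eqv t k₀ = 0 := by rw [hk₀, Equiv.apply_symm_apply]
    rw [this]
    have : chi (eqv t j) (0 : Fin t → ZMod 2) = 1 := by simp [chi]
    rw [this, mul_one]
  have hsD : s = D k₀ := by
    have := h2D k₀
    rw [hTk₀] at this
    linarith
  have hsb : -(c : ℤ) ≤ s ∧ s ≤ c := by rw [hsD]; exact hDbound k₀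
  -- final counting
  have hsum_eq : ∑ k : Fin (2 ^ t), (2 * D k) * (2 * D k)
      = R * (s * s) + 2 * s * (R * x j₀) + R * R := by
    have step : ∀ k, (2 * D k) * (2 * D k) = s * s + (2 * s * T k + T k * T k) := by
      intro k; rw [h2D k]; ring
    rw [Finset.sum_congr rfl fun k _ => step k]
    rw [Finset.sum_add_distrib, Finset.sum_add_distrib, Finset.sum_const,
      Finset.card_univ, Fintype.card_fin, ← Finset.mul_sum, hTsum, hT2]
    rw [nsmul_eq_mul, hR]
    push_cast; ring
  have hsum_le : ∑ k : Fin (2 ^ t), (2 * D k) * (2 * D k) ≤ R * (4 * (c : ℤ) * c) := by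
    calc ∑ k : Fin (2 ^ t), (2 * D k) * (2 * D k)
        ≤ ∑ _k : Fin (2 ^ t), (4 * (c : ℤ) * c) := by
          refine Finset.sum_le_sum fun k _ => ?_
          obtain ⟨hk1, hk2⟩ := hDbound k
          nlinarith
      _ = R * (4 * (c : ℤ) * c) := by
          rw [Finset.sum_const, Finset.card_univ, Fintype.card_fin, nsmul_eq_mul, hR]
          push_cast; ring
  have hmain : R * (s * s) + 2 * s * (R * x j₀) + R * R ≤ R * (4 * (c : ℤ) * c) := by
    rw [← hsum_eq]; exact hsum_le
  by_cases hs0 : s = 0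
  · rw [hs0] at hmain
    nlinarith
  · have hc1 : (1 : ℤ) ≤ c := by
      rcases hsb with ⟨hsb1, hsb2⟩
      rcases lt_trichotomy s 0 with h | h | h
      · linarith
      · exact absurd h hs0
      · linarith
    have ht1 : 1 ≤ t := by
      by_contra h
      have ht0 : t = 0 := by omega
      rw [ht0] at hrt
      norm_num at hrt
      have hcn : 1 ≤ c := by exact_mod_cast hc1
      have hc2 : 1 ≤ c ^ 2 := Nat.one_le_pow 2 c (by omega)
      omega
    have heven : (2 : ℕ) ∣ 2 ^ t := dvd_pow_self 2 (by omega)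
    have hR2 : (4 * (c : ℤ) ^ 2 + 2) ≤ R := by
      obtain ⟨u, hu⟩ := heven
      have hnat : 4 * c ^ 2 + 2 ≤ 2 ^ t := by omega
      rw [hR]; exact_mod_cast hnat
    have hkey0 : s * s + 2 * s * x j₀ + 1 = (s + x j₀) * (s + x j₀) := by
      linear_combination -hx1 j₀
    have hkey : 0 ≤ R * (s * s + 2 * s * x j₀ + 1) := by
      rw [hkey0]; exact mul_nonneg hRpos.le (mul_self_nonneg _)
    nlinarith [hkey, hmain, hR2, hRpos]

end SEFAux

/-- For every nonnegative integer `c` there is a binary identical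
MDFA instance with two agents and at most `2 * (4 * c ^ 2 + 1)` dimensions (and the
same number of items) that admits no weak sEF`c` allocation. -/
theorem no_weak_sEFc_quadratic_dims (c : ℕ) :
    ∃ r : ℕ, r ≤ 2 * (4 * c ^ 2 + 1) ∧
      ∃ v : Fin r → Fin r → ℕ,
        (∀ j k : Fin r, v j k ≤ 1) ∧
        ∀ A : Fin 2 → Finset (Fin r), IsAllocation A →
          ¬ WeakSEF (fun (_ : Fin 2) => v) A c := by
  set m : ℕ := 4 * c ^ 2 + 1 with hm
  set t : ℕ := Nat.clog 2 m with ht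
  have hge : m ≤ 2 ^ t := Nat.le_pow_clog (by norm_num) m
  have hle : 2 ^ t ≤ 2 * m := by
    rcases Nat.lt_or_ge m 2 with h | h
    · have hm1 : m = 1 := by omega
      have ht0 : t = 0 := by rw [ht, hm1, Nat.clog_one_right]
      rw [ht0]; omega
    · have htpos : 0 < t := by
        rw [ht]; exact Nat.clog_pos (by norm_num) h
      have h2 : 2 ^ (t - 1) < m := Nat.pow_pred_clog_lt_self (by norm_num) h
      have : 2 ^ t = 2 * 2 ^ (t - 1) := by
        rw [← pow_succ']; congr 1; omega
      omega
  exact ⟨2 ^ t, by omega, SEFAux.V t, SEFAux.V_le_one t,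
    fun A hA => SEFAux.no_alloc c t hge A hA⟩
end

section
/- For every nonnegative integer c there exists a binary identical MDFA instance with two agents, 2c + 1 items and 2c + 1 dimensions that admits no strong sEFc allocation. Concretely, the instance with items g_1, …, g_{2c+1}, dimensions [2c+1], and identical valuations v_{jk} = 1 if j = k and v_{jk} = 0 otherwise admits no strong sEFc allocation. -/
/-- For every nonnegative integer `c`, the binary identical
instance with two agents, `2c+1` items, `2c+1` dimensions, and valuations
`v j k = 1` iff `j = k` admits no strong sEF`c` allocation. -/
theorem no_strong_sEFc_identity_instance (c : ℕ) :
    ∀ A : Fin 2 → Finset (Fin (2 * c + 1)), IsAllocation A →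
      ¬ StrongSEF (fun (_ : Fin 2) (j k : Fin (2 * c + 1)) =>
          if j = k then 1 else 0) A c := by
  intro A hA hS
  obtain ⟨hcov, hdisj⟩ := hA
  have key : ∀ i i' : Fin 2, i ≠ i' → (A i').card ≤ c := by
    intro i i' hne
    obtain ⟨X, hXsub, hXcard, hk⟩ := hS i i' hne
    have hsub : A i' ⊆ X := by
      intro k hk'
      by_contra hkX
      have h1 := hk k
      rw [Finset.sum_ite_eq' (A i' \ X) k, Finset.sum_ite_eq' (A i) k] at h1
      simp only [Finset.mem_sdiff, hk', hkX, not_false_iff, and_self, if_true] at h1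
      have hmem : k ∈ A i := by
        by_contra hnm
        simp [hnm] at h1
      exact absurd hk' (Finset.disjoint_left.mp (hdisj i i' hne) hmem)
    exact le_trans (Finset.card_le_card hsub) hXcard
  have h0 := key 0 1 (by decide)
  have h1 := key 1 0 (by decide)
  have huniv : (Finset.univ : Finset (Fin (2*c+1))) ⊆ A 0 ∪ A 1 := by
    intro g _
    obtain ⟨i, hi⟩ := hcov g
    fin_cases i <;> simp [Finset.mem_union] <;> tauto
  have hcard := Finset.card_le_card huniv
  have hle := Finset.card_union_le (A 0) (A 1)
  simp [Finset.card_univ] at hcard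
  omega
end

section
/- Every MDFA instance with two agents and ℓ dimensions admits a strong sEF(2ℓ − 1) allocation. Consequently, for every integer c ≥ 2ℓ − 1, a strong sEFc allocation exists. -/
open Finset

set_option linter.unusedSectionVars false

section SEFHelpers

variable {Item : Type*} [Fintype Item] [DecidableEq Item]

private lemma sEF_claim1 (x : Item → ℚ) (w : Item → ℚ) (hw : ∀ h, 0 ≤ w h)
    (hx1 : ∀ h, x h ≤ 1)
    (R : 0 ≤ ∑ h, (2 * x h - 1) * w h) :
    ∑ h ∈ univ.filter (fun h => x h = 0), w h
      ≤ ∑ h ∈ univ.filter (fun h => 1/2 < x h), w h := by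
  have key : ∀ h : Item, (2 * x h - 1) * w h ≤
      (if 1/2 < x h then w h else 0) - (if x h = 0 then w h else 0) := by
    intro h
    by_cases h1 : 1/2 < x h
    · have h2 : ¬ x h = 0 := by intro h'; rw [h'] at h1; norm_num at h1
      simp only [if_pos h1, if_neg h2, sub_zero]
      nlinarith [hw h, hx1 h]
    · by_cases h2 : x h = 0
      · simp only [if_neg h1, if_pos h2, zero_sub]
        rw [h2]
        ring_nf
        exact le_refl _
      · simp only [if_neg h1, if_neg h2, sub_zero]
        push_neg at h1
        nlinarith [hw h]
  have hsum : ∑ h, (2 * x h - 1) * w h ≤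
      (∑ h ∈ univ.filter (fun h => 1/2 < x h), w h)
        - ∑ h ∈ univ.filter (fun h => x h = 0), w h := by
    rw [Finset.sum_filter, Finset.sum_filter, ← Finset.sum_sub_distrib]
    exact Finset.sum_le_sum fun h _ => key h
  linarith

private lemma sEF_claim2 (x : Item → ℚ) (w : Item → ℚ) (hw : ∀ h, 0 ≤ w h)
    (hx0 : ∀ h, 0 ≤ x h)
    (R : ∑ h, (2 * x h - 1) * w h ≤ 0) :
    ∑ h ∈ univ.filter (fun h => x h = 1), w h
      ≤ ∑ h ∈ univ.filter (fun h => ¬ 1/2 < x h), w h := by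
  have key : ∀ h : Item,
      (if x h = 1 then w h else 0) - (if ¬ 1/2 < x h then w h else 0)
        ≤ (2 * x h - 1) * w h := by
    intro h
    by_cases h1 : x h = 1
    · have hlt : (1:ℚ)/2 < x h := by rw [h1]; norm_num
      simp only [if_pos h1, if_neg (not_not_intro hlt), sub_zero]
      rw [h1]; ring_nf
      exact le_refl _
    · by_cases h2 : 1/2 < x h
      · simp only [if_neg h1, if_neg (not_not_intro h2), sub_zero]
        nlinarith [hw h]
      · simp only [if_neg h1, if_pos h2, zero_sub]
        nlinarith [hw h, hx0 h, mul_nonneg (hx0 h) (hw h)]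
  have hsum : (∑ h ∈ univ.filter (fun h => x h = 1), w h)
      - (∑ h ∈ univ.filter (fun h => ¬ 1/2 < x h), w h)
        ≤ ∑ h, (2 * x h - 1) * w h := by
    rw [Finset.sum_filter, Finset.sum_filter, ← Finset.sum_sub_distrib]
    exact Finset.sum_le_sum fun h _ => key h
  linarith


private def SEFGood (L : ℕ) (v0 v1 : Item → Fin (L+1) → ℕ) (x : Item → ℚ) : Prop :=
  (∀ h, 0 ≤ x h) ∧ (∀ h, x h ≤ 1) ∧
  (∀ k, 0 ≤ ∑ h, (2 * x h - 1) * (v0 h k : ℚ)) ∧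
  (∀ j : Fin L, ∑ h, (2 * x h - 1) * (v1 h j.castSucc : ℚ) ≤ 0) ∧
  (∑ h, (2 * x h - 1) * (v1 h (Fin.last L) : ℚ) ≤ 0)

private def SEFfrac (x : Item → ℚ) : Finset Item :=
  Finset.univ.filter (fun h => x h ≠ 0 ∧ x h ≠ 1)

private lemma sEF_descent (L : ℕ) (v0 v1 : Item → Fin (L+1) → ℕ) (x : Item → ℚ)
    (hx : SEFGood L v0 v1 x) (hbig : 2 * L + 2 ≤ (SEFfrac x).card) :
    ∃ y : Item → ℚ, SEFGood L v0 v1 y ∧ (SEFfrac y).card < (SEFfrac x).card := by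
  classical
  obtain ⟨hx0, hx1, hrow0, hrow1, hrowK⟩ := hx
  set F := SEFfrac x with hF
  have hFmem : ∀ h, h ∈ F ↔ (x h ≠ 0 ∧ x h ≠ 1) := by
    intro h; rw [hF]; simp [SEFfrac]
  have hxF : ∀ h, h ∈ F → 0 < x h ∧ x h < 1 := by
    intro h hh
    rw [hFmem] at hh
    exact ⟨lt_of_le_of_ne (hx0 h) (Ne.symm hh.1), lt_of_le_of_ne (hx1 h) hh.2⟩
  -- a nonzero kernel direction supported on F
  let φ : (↥F → ℚ) →ₗ[ℚ] ((Fin (L+1) → ℚ) × (Fin L → ℚ)) :=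
    { toFun := fun d => (fun k => ∑ h ∈ F.attach, d h * (v0 h k : ℚ),
                         fun j => ∑ h ∈ F.attach, d h * (v1 h j.castSucc : ℚ))
      map_add' := by
        intro a b
        refine Prod.ext ?_ ?_ <;> funext k <;>
          simp [add_mul, Finset.sum_add_distrib]
      map_smul' := by
        intro a b
        refine Prod.ext ?_ ?_ <;> funext k <;>
          simp [Finset.mul_sum, mul_assoc] }
  have hnotinj : ¬ Function.Injective φ := by
    intro hinj
    have hle := LinearMap.finrank_le_finrank_of_injective hinj
    rw [Module.finrank_pi, Module.finrank_prod, Module.finrank_pi, Module.finrank_pi,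
      Fintype.card_coe, Fintype.card_fin, Fintype.card_fin] at hle
    omega
  obtain ⟨a, b, hab, habne⟩ := Function.not_injective_iff.mp hnotinj
  have hφ : φ (a - b) = 0 := by rw [map_sub, hab, sub_self]
  set d0 : ↥F → ℚ := a - b with hd0
  have hd0ne : d0 ≠ 0 := sub_ne_zero.mpr habne
  -- extend to Item
  set D : Item → ℚ := fun h => if hh : h ∈ F then d0 ⟨h, hh⟩ else 0 with hD
  have hDzero : ∀ h, h ∉ F → D h = 0 := by
    intro h hh; rw [hD]; exact dif_neg hh
  have hDsum : ∀ c : Item → ℚ, ∑ h, D h * c h = ∑ h ∈ F.attach, d0 h * c h := by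
    intro c
    rw [← Finset.sum_subset (Finset.subset_univ F)
      (fun h _ hh => by rw [hDzero h hh, zero_mul])]
    rw [← Finset.sum_attach F (fun h => D h * c h)]
    refine Finset.sum_congr rfl fun h _ => ?_
    congr 1
    rw [hD]
    simp [dif_pos h.2]
  have hrowD0 : ∀ k, ∑ h, D h * (v0 h k : ℚ) = 0 := by
    intro k
    have h1 : (φ d0).1 k = 0 := by rw [hφ]; rfl
    rw [hDsum]
    exact h1
  have hrowD1 : ∀ j : Fin L, ∑ h, D h * (v1 h j.castSucc : ℚ) = 0 := by
    intro j
    have h1 : (φ d0).2 j = 0 := by rw [hφ]; rfl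
    rw [hDsum]
    exact h1
  have hDne : ∃ h, D h ≠ 0 := by
    obtain ⟨h, hh⟩ := Function.ne_iff.mp hd0ne
    refine ⟨(h : Item), ?_⟩
    rw [hD]
    simpa [dif_pos h.2] using hh
  -- choose the sign
  obtain ⟨d, hdsupp, hdrow0, hdrow1, hdlast, hdne⟩ :
      ∃ d : Item → ℚ, (∀ h, h ∉ F → d h = 0) ∧
        (∀ k, ∑ h, d h * (v0 h k : ℚ) = 0) ∧
        (∀ j : Fin L, ∑ h, d h * (v1 h j.castSucc : ℚ) = 0) ∧
        (∑ h, d h * (v1 h (Fin.last L) : ℚ) ≤ 0) ∧ (∃ h, d h ≠ 0) := by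
    by_cases hrsign : (∑ h, D h * (v1 h (Fin.last L) : ℚ)) ≤ 0
    · exact ⟨D, hDzero, hrowD0, hrowD1, hrsign, hDne⟩
    · refine ⟨fun h => - D h, fun h hh => by show - D h = 0; rw [hDzero h hh, neg_zero], ?_, ?_, ?_, ?_⟩
      · intro k
        simp only [neg_mul, Finset.sum_neg_distrib, hrowD0 k, neg_zero]
      · intro j
        simp only [neg_mul, Finset.sum_neg_distrib, hrowD1 j, neg_zero]
      · simp only [neg_mul, Finset.sum_neg_distrib]
        linarith
      · obtain ⟨h, hh⟩ := hDne
        exact ⟨h, neg_ne_zero.mpr hh⟩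
  have hsuppF : ∀ h : Item, d h ≠ 0 → h ∈ F := by
    intro h hh
    by_contra hmem
    exact hh (hdsupp h hmem)
  obtain ⟨h₁, hh₁⟩ := hdne
  set supp := univ.filter (fun h => d h ≠ 0) with hsupp
  have hsne : supp.Nonempty := ⟨h₁, by rw [hsupp]; simp [hh₁]⟩
  set tv : Item → ℚ := fun h => if 0 < d h then (1 - x h) / d h else x h / (- d h) with htv
  set t := supp.inf' hsne tv with ht
  have htpos : 0 < t := by
    rw [ht, Finset.lt_inf'_iff]
    intro h hh
    rw [hsupp, Finset.mem_filter] at hh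
    obtain ⟨hx0', hx1'⟩ := hxF h (hsuppF h hh.2)
    rw [htv]
    by_cases hd : 0 < d h
    · simp only [if_pos hd]
      exact div_pos (by linarith) hd
    · have hdneg : d h < 0 := lt_of_le_of_ne (not_lt.mp hd) hh.2
      simp only [if_neg hd]
      exact div_pos hx0' (by linarith)
  have htle : ∀ h, d h ≠ 0 → t ≤ tv h := by
    intro h hh
    exact Finset.inf'_le _ (by rw [hsupp]; simp [hh])
  obtain ⟨h0, hh0mem, hh0pre⟩ := Finset.exists_mem_eq_inf' hsne tv
  have hh0 : t = tv h0 := by rw [ht]; exact hh0pre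
  have hh0d : d h0 ≠ 0 := by
    rw [hsupp, Finset.mem_filter] at hh0mem
    exact hh0mem.2
  have hh0F : h0 ∈ F := hsuppF h0 hh0d
  set x' : Item → ℚ := fun h => x h + t * d h with hx'
  have htvdef : ∀ h, tv h = if 0 < d h then (1 - x h) / d h else x h / (- d h) := fun _ => rfl
  have hx'def : ∀ h, x' h = x h + t * d h := fun _ => rfl
  -- bounds
  have hb : ∀ h, 0 ≤ x' h ∧ x' h ≤ 1 := by
    intro h
    rw [hx'def h]
    rcases lt_trichotomy (d h) 0 with hd | hd | hd
    · have hle := htle h (ne_of_lt hd)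
      rw [htvdef h, if_neg (not_lt.mpr hd.le)] at hle
      have h1 : t * (- d h) ≤ x h := (le_div_iff₀ (by linarith)).mp hle
      constructor
      · nlinarith
      · nlinarith [hx1 h, htpos]
    · simp [hx0 h, hx1 h, hd]
    · have hle := htle h (ne_of_gt hd)
      rw [htvdef h, if_pos hd] at hle
      have h1 : t * d h ≤ 1 - x h := (le_div_iff₀ hd).mp hle
      constructor
      · nlinarith [hx0 h, htpos]
      · nlinarith
  -- rows shift
  have hshift : ∀ c : Item → ℚ,
      ∑ h, (2 * x' h - 1) * c h
        = (∑ h, (2 * x h - 1) * c h) + 2 * t * ∑ h, d h * c h := by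
    intro c
    rw [Finset.mul_sum, ← Finset.sum_add_distrib]
    refine Finset.sum_congr rfl fun h _ => ?_
    rw [hx'def h]
    ring
  have hgood' : SEFGood L v0 v1 x' := by
    refine ⟨fun h => (hb h).1, fun h => (hb h).2, ?_, ?_, ?_⟩
    · intro k
      rw [hshift, hdrow0 k]
      simpa using hrow0 k
    · intro j
      rw [hshift, hdrow1 j]
      simpa using hrow1 j
    · rw [hshift]
      nlinarith [hdlast, htpos, hrowK]
  -- the fractional set shrinks
  have hsub : SEFfrac x' ⊆ F.erase h0 := by
    intro h hh
    simp only [SEFfrac, Finset.mem_filter, Finset.mem_univ, true_and] at hh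
    have hmemF : h ∈ F := by
      by_contra hmem
      have hd0' : d h = 0 := hdsupp h hmem
      have hxx : x' h = x h := by rw [hx'def h, hd0', mul_zero, add_zero]
      rw [hFmem] at hmem
      push_neg at hmem
      by_cases hz : x h = 0
      · exact hh.1 (by rw [hxx, hz])
      · exact hh.2 (by rw [hxx, hmem hz])
    have hne0 : h ≠ h0 := by
      rintro rfl
      rcases lt_or_gt_of_ne hh0d with hd | hd
      · have htv0 : tv h = x h / (- d h) := by rw [htvdef h, if_neg (not_lt.mpr hd.le)]
        have hxx : x' h = 0 := by
          rw [hx'def h, hh0, htv0, div_mul_eq_mul_div, div_neg, mul_div_assoc,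
            div_self hh0d, mul_one]
          ring
        exact hh.1 hxx
      · have htv0 : tv h = (1 - x h) / d h := by rw [htvdef h, if_pos hd]
        have hxx : x' h = 1 := by
          rw [hx'def h, hh0, htv0, div_mul_eq_mul_div, mul_div_assoc,
            div_self hh0d, mul_one]
          ring
        exact hh.2 hxx
    exact Finset.mem_erase.mpr ⟨hne0, hmemF⟩
  have hcardlt : (SEFfrac x').card < (SEFfrac x).card := by
    have h1 := Finset.card_le_card hsub
    rw [Finset.card_erase_of_mem hh0F] at h1
    have h2 : 1 ≤ F.card := by omega
    rw [← hF]
    omega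
  exact ⟨x', hgood', hcardlt⟩


private lemma sEF_vertex (L : ℕ) (v0 v1 : Item → Fin (L+1) → ℕ) :
    ∃ x : Item → ℚ, (∀ h, 0 ≤ x h) ∧ (∀ h, x h ≤ 1) ∧
      (∀ k, 0 ≤ ∑ h, (2 * x h - 1) * (v0 h k : ℚ)) ∧
      (∀ k, ∑ h, (2 * x h - 1) * (v1 h k : ℚ) ≤ 0) ∧
      (SEFfrac x).card ≤ 2 * L + 1 := by
  classical
  have hhalf : SEFGood L v0 v1 (fun _ => 1/2) := by
    refine ⟨fun h => by norm_num, fun h => by norm_num, ?_, ?_, ?_⟩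
    · intro k
      simp [show (2:ℚ) * (1/2) - 1 = 0 by norm_num]
    · intro j
      simp [show (2:ℚ) * (1/2) - 1 = 0 by norm_num]
    · simp [show (2:ℚ) * (1/2) - 1 = 0 by norm_num]
  have H : ∀ n (x : Item → ℚ), SEFGood L v0 v1 x → (SEFfrac x).card ≤ n →
      ∃ y, SEFGood L v0 v1 y ∧ (SEFfrac y).card ≤ 2 * L + 1 := by
    intro n
    induction n with
    | zero => exact fun x hx hcard => ⟨x, hx, by omega⟩
    | succ n ih =>
        intro x hx hcard
        by_cases hle : (SEFfrac x).card ≤ 2 * L + 1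
        · exact ⟨x, hx, hle⟩
        · obtain ⟨y, hy, hlt⟩ := sEF_descent L v0 v1 x hx (by omega)
          exact ih y hy (by omega)
  obtain ⟨y, hy, hcard⟩ := H _ _ hhalf le_rfl
  refine ⟨y, hy.1, hy.2.1, hy.2.2.1, ?_, hcard⟩
  intro k
  refine Fin.lastCases ?_ ?_ k
  · exact hy.2.2.2.2
  · exact hy.2.2.2.1

end SEFHelpers

/-- Every MDFA instance with two agents and `ℓ` dimensions admits
a strong sEF`(2ℓ - 1)` allocation; consequently a strong sEF`c` allocation exists
for every `c ≥ 2ℓ - 1`. -/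
theorem strong_sEFc_exists_two_agents {Item : Type*} [Fintype Item] [DecidableEq Item]
    (ℓ : ℕ) (v : Fin 2 → Item → Fin ℓ → ℕ) (c : ℕ) (hc : 2 * ℓ - 1 ≤ c) :
    ∃ A : Fin 2 → Finset Item, IsAllocation A ∧ StrongSEF v A c := by
  classical
  cases ℓ with
  | zero =>
      refine ⟨![Finset.univ, ∅], ⟨fun g => ⟨0, by simp⟩, ?_⟩, ?_⟩
      · intro i i' hne
        fin_cases i <;> fin_cases i' <;>
          first
            | exact absurd rfl hne
            | simp
      · intro i i' hne
        exact ⟨∅, Finset.empty_subset _, by simp, fun k => k.elim0⟩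
  | succ L =>
      obtain ⟨x, hx0, hx1, hrow0, hrow1, hfcard⟩ := sEF_vertex L (v 0) (v 1)
      have hc' : 2 * L + 1 ≤ c := by omega
      set B : Finset Item := Finset.univ.filter (fun h => 1/2 < x h) with hB
      have hBc : Bᶜ = Finset.univ.filter (fun h => ¬ 1/2 < x h) := by
        ext h
        rw [Finset.mem_compl, hB]
        simp
      refine ⟨![B, Bᶜ], ⟨?_, ?_⟩, ?_⟩
      · intro g
        by_cases hg : g ∈ B
        · exact ⟨0, by simpa using hg⟩
        · exact ⟨1, by simpa using hg⟩
      · intro i i' hne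
        fin_cases i <;> fin_cases i'
        · exact absurd rfl hne
        · exact disjoint_compl_right
        · exact disjoint_compl_left
        · exact absurd rfl hne
      · intro i i' hne
        fin_cases i <;> fin_cases i'
        · exact absurd rfl hne
        · -- pair (0, 1) : agent 0 compares with Bᶜ
          show ∃ X : Finset Item, X ⊆ Bᶜ ∧ X.card ≤ c ∧
            ∀ k, ∑ g ∈ Bᶜ \ X, v 0 g k ≤ ∑ g ∈ B, v 0 g k
          refine ⟨Finset.univ.filter (fun h => (x h ≠ 0 ∧ x h ≠ 1) ∧ ¬ 1/2 < x h),
            ?_, ?_, ?_⟩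
          · intro h hh
            rw [Finset.mem_filter] at hh
            rw [hBc, Finset.mem_filter]
            exact ⟨hh.1, hh.2.2⟩
          · refine le_trans (le_trans ?_ hfcard) hc'
            apply Finset.card_le_card
            intro h hh
            rw [Finset.mem_filter] at hh
            rw [SEFfrac, Finset.mem_filter]
            exact ⟨hh.1, hh.2.1⟩
          · intro k
            have hset : Bᶜ \ (Finset.univ.filter (fun h => (x h ≠ 0 ∧ x h ≠ 1) ∧ ¬ 1/2 < x h))
                = Finset.univ.filter (fun h => x h = 0) := by
              ext h
              rw [Finset.mem_sdiff, hBc, Finset.mem_filter, Finset.mem_filter, Finset.mem_filter]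
              constructor
              · rintro ⟨⟨-, hle⟩, hnot⟩
                refine ⟨Finset.mem_univ h, ?_⟩
                by_contra hne0
                exact hnot ⟨Finset.mem_univ h, ⟨hne0,
                  fun h1 => hle (by rw [h1]; norm_num)⟩, hle⟩
              · rintro ⟨-, hz⟩
                refine ⟨⟨Finset.mem_univ h, fun hlt => by rw [hz] at hlt; norm_num at hlt⟩, ?_⟩
                rintro ⟨-, ⟨hne0, -⟩, -⟩
                exact hne0 hz
            rw [hset]
            have hcl := sEF_claim1 x (fun h => (v 0 h k : ℚ))
              (fun h => by positivity) hx1 (hrow0 k)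
            rw [hB]
            exact_mod_cast hcl
        · -- pair (1, 0) : agent 1 compares with B
          show ∃ X : Finset Item, X ⊆ B ∧ X.card ≤ c ∧
            ∀ k, ∑ g ∈ B \ X, v 1 g k ≤ ∑ g ∈ Bᶜ, v 1 g k
          refine ⟨Finset.univ.filter (fun h => (x h ≠ 0 ∧ x h ≠ 1) ∧ 1/2 < x h),
            ?_, ?_, ?_⟩
          · intro h hh
            rw [Finset.mem_filter] at hh
            rw [hB, Finset.mem_filter]
            exact ⟨hh.1, hh.2.2⟩
          · refine le_trans (le_trans ?_ hfcard) hc'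
            apply Finset.card_le_card
            intro h hh
            rw [Finset.mem_filter] at hh
            rw [SEFfrac, Finset.mem_filter]
            exact ⟨hh.1, hh.2.1⟩
          · intro k
            have hset : B \ (Finset.univ.filter (fun h => (x h ≠ 0 ∧ x h ≠ 1) ∧ 1/2 < x h))
                = Finset.univ.filter (fun h => x h = 1) := by
              ext h
              rw [Finset.mem_sdiff, hB, Finset.mem_filter, Finset.mem_filter, Finset.mem_filter]
              constructor
              · rintro ⟨⟨-, hlt⟩, hnot⟩
                refine ⟨Finset.mem_univ h, ?_⟩
                by_contra hne1
                exact hnot ⟨Finset.mem_univ h, ⟨fun h0 => by rw [h0] at hlt; norm_num at hlt,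
                  hne1⟩, hlt⟩
              · rintro ⟨-, hone⟩
                refine ⟨⟨Finset.mem_univ h, by rw [hone]; norm_num⟩, ?_⟩
                rintro ⟨-, ⟨-, hne1⟩, -⟩
                exact hne1 hone
            rw [hset, hBc]
            have hcl := sEF_claim2 x (fun h => (v 1 h k : ℚ))
              (fun h => by positivity) hx0 (hrow1 k)
            exact_mod_cast hcl
        · exact absurd rfl hne
end

section
/- Correctness of the reduction from monotone not-all-equal 3-SAT to weak sEF1 existence: let x_1, …, x_n be variables and C_1, …, C_m clauses, each clause C_k = (z_{k,1}, z_{k,2}, z_{k,3}) a triple of (unnegated) variables. Construct the MDFA instance with two identical agents, items M = {g_1, …, g_n}, dimensions L = [m], and valuations v_{jk} = 1 if x_j ∈ {z_{k,1}, z_{k,2}, z_{k,3}} and v_{jk} = 0 otherwise. Then this instance admits a weak sEF1 allocation if and only if there exists a truth assignment to x_1, …, x_n such that every clause C_k contains at least one true variable and at least one false variable. -/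

lemma sum_indicator_eq {n m : ℕ} (z : Fin m → Fin 3 → Fin n) (k : Fin m)
    (S : Finset (Fin n)) :
    ∑ g ∈ S, (if ∃ t, z k t = g then (1:ℕ) else 0) =
      ((Finset.univ.image (z k)) ∩ S).card := by
  classical
  rw [Finset.sum_boole, Nat.cast_id]
  congr 1
  ext g
  simp [Finset.mem_filter, Finset.mem_inter, Finset.mem_image, and_comm]

lemma card_image_three {n m : ℕ} (z : Fin m → Fin 3 → Fin n)
    (hz : ∀ k, Function.Injective (z k)) (k : Fin m) :
    (Finset.univ.image (z k)).card = 3 := by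
  rw [Finset.card_image_of_injective _ (hz k), Finset.card_univ, Fintype.card_fin]


/-- Correctness of the reduction from monotone not-all-equal
3-SAT to weak sEF1 existence: given clauses `C_k = (z k 0, z k 1, z k 2)` over
variables `Fin n` (three distinct variables per clause), the two-identical-agent
instance with items `Fin n`, dimensions `Fin m`, and valuations `v j k = 1` iff
variable `j` appears in clause `k`, admits a weak sEF1 allocation iff there is a
truth assignment making at least one variable true and at least one variable
false in every clause. -/
theorem weak_sEF1_iff_mnae3sat (n m : ℕ) (z : Fin m → Fin 3 → Fin n)
    (hz : ∀ k, Function.Injective (z k)) :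
    (∃ A : Fin 2 → Finset (Fin n), IsAllocation A ∧
        WeakSEF (fun (_ : Fin 2) (j : Fin n) (k : Fin m) =>
          if ∃ t, z k t = j then 1 else 0) A 1) ↔
      ∃ σ : Fin n → Bool, ∀ k : Fin m,
        (∃ t, σ (z k t) = true) ∧ (∃ t, σ (z k t) = false) := by
  classical
  constructor
  · rintro ⟨A, ⟨hcov, hdisj⟩, hsef⟩
    refine ⟨fun j => decide (j ∈ A 0), fun k => ?_⟩
    constructor
    · by_contra hno
      push_neg at hno
      have hA0 : ∀ t, z k t ∉ A 0 := by
        intro t ht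
        exact hno t (by simpa using ht)
      have hA1 : ∀ t, z k t ∈ A 1 := by
        intro t
        obtain ⟨i, hi⟩ := hcov (z k t)
        fin_cases i
        · exact absurd hi (hA0 t)
        · exact hi
      obtain ⟨X, hXsub, hXcard, hle⟩ := hsef 0 1 (by decide) k
      simp only [sum_indicator_eq] at hle
      have h1 : ((Finset.univ.image (z k)) ∩ A 0) = ∅ := by
        ext g
        simp only [Finset.mem_inter, Finset.mem_image, Finset.mem_univ, true_and,
          Finset.notMem_empty, iff_false, not_and]
        rintro ⟨t, rfl⟩
        exact hA0 t
      have hsub : (Finset.univ.image (z k)) ⊆ A 1 := by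
        intro g hg
        obtain ⟨t, -, rfl⟩ := Finset.mem_image.mp hg
        exact hA1 t
      have h2 : (Finset.univ.image (z k)) ∩ (A 1 \ X) =
          (Finset.univ.image (z k)) \ X := by
        ext g
        simp only [Finset.mem_inter, Finset.mem_sdiff]
        constructor
        · rintro ⟨h, -, hx⟩; exact ⟨h, hx⟩
        · rintro ⟨h, hx⟩; exact ⟨h, hsub h, hx⟩
      rw [h1, h2] at hle
      have h3 := Finset.le_card_sdiff X (Finset.univ.image (z k))
      rw [card_image_three z hz k] at h3
      simp only [Finset.card_empty] at hle
      omega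
    · by_contra hno
      push_neg at hno
      have hA0 : ∀ t, z k t ∈ A 0 := by
        intro t
        have := hno t
        simp at this
        exact this
      obtain ⟨X, hXsub, hXcard, hle⟩ := hsef 1 0 (by decide) k
      simp only [sum_indicator_eq] at hle
      have h1 : ((Finset.univ.image (z k)) ∩ A 1) = ∅ := by
        ext g
        simp only [Finset.mem_inter, Finset.mem_image, Finset.mem_univ, true_and,
          Finset.notMem_empty, iff_false, not_and]
        rintro ⟨t, rfl⟩
        exact Finset.disjoint_left.mp (hdisj 0 1 (by decide)) (hA0 t)
      have hsub : (Finset.univ.image (z k)) ⊆ A 0 := by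
        intro g hg
        obtain ⟨t, -, rfl⟩ := Finset.mem_image.mp hg
        exact hA0 t
      have h2 : (Finset.univ.image (z k)) ∩ (A 0 \ X) =
          (Finset.univ.image (z k)) \ X := by
        ext g
        simp only [Finset.mem_inter, Finset.mem_sdiff]
        constructor
        · rintro ⟨h, -, hx⟩; exact ⟨h, hx⟩
        · rintro ⟨h, hx⟩; exact ⟨h, hsub h, hx⟩
      rw [h1, h2] at hle
      have h3 := Finset.le_card_sdiff X (Finset.univ.image (z k))
      rw [card_image_three z hz k] at h3
      simp only [Finset.card_empty] at hle
      omega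
  · rintro ⟨σ, hσ⟩
    set A : Fin 2 → Finset (Fin n) :=
      fun i => Finset.univ.filter (fun j => σ j = decide (i = 0)) with hA
    have hmem : ∀ i j, j ∈ A i ↔ σ j = decide (i = 0) := by
      intro i j; simp [hA]
    refine ⟨A, ⟨?_, ?_⟩, ?_⟩
    · intro g
      by_cases h : σ g = true
      · exact ⟨0, (hmem 0 g).mpr (by simp [h])⟩
      · exact ⟨1, (hmem 1 g).mpr (by simp at h ⊢; exact h)⟩
    · intro i i' hne
      rw [Finset.disjoint_left]
      intro g hg hg'
      rw [hmem] at hg hg'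
      fin_cases i <;> fin_cases i' <;> simp_all
    · intro i i' hne k
      obtain ⟨⟨t1, ht1⟩, ⟨t0, ht0⟩⟩ := hσ k
      have hin : ∀ j : Fin 2, ∃ t, z k t ∈ A j := by
        intro j
        fin_cases j
        · exact ⟨t1, (hmem 0 _).mpr (by simp [ht1])⟩
        · exact ⟨t0, (hmem 1 _).mpr (by simp [ht0])⟩
      obtain ⟨ta, hta⟩ := hin i
      obtain ⟨tb, htb⟩ := hin i'
      refine ⟨{z k tb}, by simpa using htb, by simp, ?_⟩
      simp only [sum_indicator_eq]
      have hdisj2 : Disjoint ((Finset.univ.image (z k)) ∩ A i)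
          ((Finset.univ.image (z k)) ∩ A i') := by
        apply Finset.disjoint_left.mpr
        intro g hg hg'
        rw [Finset.mem_inter, hmem] at hg hg'
        fin_cases i <;> fin_cases i' <;> simp_all
      have hsum : ((Finset.univ.image (z k)) ∩ A i).card +
          ((Finset.univ.image (z k)) ∩ A i').card ≤ 3 := by
        rw [← Finset.card_union_of_disjoint hdisj2]
        calc ((Finset.univ.image (z k)) ∩ A i ∪ (Finset.univ.image (z k)) ∩ A i').card
            ≤ (Finset.univ.image (z k)).card :=
              Finset.card_le_card (by
                intro g hg
                rcases Finset.mem_union.mp hg with h | h <;>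
                  exact (Finset.mem_inter.mp h).1)
          _ = 3 := card_image_three z hz k
      have ha : 1 ≤ ((Finset.univ.image (z k)) ∩ A i).card := by
        refine Finset.card_pos.mpr ⟨z k ta, ?_⟩
        exact Finset.mem_inter.mpr ⟨Finset.mem_image.mpr ⟨ta, Finset.mem_univ _, rfl⟩, hta⟩
      have heq : (Finset.univ.image (z k)) ∩ (A i' \ {z k tb}) =
          ((Finset.univ.image (z k)) ∩ A i') \ {z k tb} := by
        ext g
        simp only [Finset.mem_inter, Finset.mem_sdiff]
        tauto
      rw [heq, Finset.card_sdiff_of_subset (by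
        simp only [Finset.singleton_subset_iff, Finset.mem_inter]
        exact ⟨Finset.mem_image.mpr ⟨tb, Finset.mem_univ _, rfl⟩, htb⟩)]
      simp only [Finset.card_singleton]
      omega
end

section
/- Correctness of the reduction from PARTITION to strong sEF1 existence: let a_1, …, a_n be positive integers with Σ_{j=1}^n a_j = 2T. Construct the MDFA instance with two identical agents, items M = {g_1, …, g_{n+2}}, two dimensions, and valuations v(g_j) = (a_j, a_j) for j ∈ [n], v(g_{n+1}) = (2T+1, 0), and v(g_{n+2}) = (0, 2T+1). Then this instance admits a strong sEF1 allocation if and only if there exists a partition (S_1, S_2) of [n] with Σ_{j∈S_1} a_j = Σ_{j∈S_2} a_j = T. -/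
open Finset Sum

lemma sum_disjSum' {α β : Type*} (s : Finset α) (t : Finset β) (f : α ⊕ β → ℕ) :
    ∑ x ∈ s.disjSum t, f x = ∑ x ∈ s, f (inl x) + ∑ x ∈ t, f (inr x) := by
  rw [← Finset.map_inl_disjUnion_map_inr, Finset.sum_disjUnion, Finset.sum_map, Finset.sum_map]
  rfl

lemma sum_split' {α β : Type*} (B : Finset (α ⊕ β)) (f : α ⊕ β → ℕ) :
    ∑ x ∈ B, f x = ∑ x ∈ B.toLeft, f (inl x) + ∑ x ∈ B.toRight, f (inr x) := by
  conv_lhs => rw [← Finset.toLeft_disjSum_toRight (u := B)]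
  exact sum_disjSum' _ _ f


/-- Correctness of the reduction from PARTITION to strong sEF1
existence: for positive integers `a 0, …, a (n-1)` with total sum `2T`, the
two-identical-agent instance with items `Fin n ⊕ Fin 2`, two dimensions, and
valuations `v gⱼ = (aⱼ, aⱼ)`, `v g_{n+1} = (2T+1, 0)`, `v g_{n+2} = (0, 2T+1)`
admits a strong sEF1 allocation iff `[n]` can be partitioned into two parts each
summing to `T`. -/
theorem strong_sEF1_iff_partition (n T : ℕ) (a : Fin n → ℕ) (ha : ∀ j, 0 < a j)
    (hsum : ∑ j, a j = 2 * T) :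
    (∃ A : Fin 2 → Finset (Fin n ⊕ Fin 2), IsAllocation A ∧
        StrongSEF (fun (_ : Fin 2) (g : Fin n ⊕ Fin 2) (k : Fin 2) =>
          Sum.elim (fun j => a j)
            (fun e => ![![2 * T + 1, 0], ![0, 2 * T + 1]] e k) g) A 1) ↔
      ∃ S : Finset (Fin n), ∑ j ∈ S, a j = T ∧ ∑ j ∈ Sᶜ, a j = T := by
  set M : Fin 2 → Fin 2 → ℕ := ![![2 * T + 1, 0], ![0, 2 * T + 1]] with hM
  set v : Fin 2 → (Fin n ⊕ Fin 2) → Fin 2 → ℕ :=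
    fun _ g k => Sum.elim (fun j => a j) (fun e => M e k) g with hv
  have two : ∀ x y z : Fin 2, y ≠ z → x = y ∨ x = z := by decide
  constructor
  · rintro ⟨A, ⟨hcov, hdisj⟩, hsef⟩
    obtain ⟨i0, h0⟩ := hcov (inr 0)
    obtain ⟨i1, h1⟩ := hcov (inr 1)
    -- value of a bundle whose right part vanishes in dimension k
    have valeq : ∀ (B : Finset (Fin n ⊕ Fin 2)) (ag k : Fin 2),
        (∀ x ∈ B.toRight, M x k = 0) →
        ∑ g ∈ B, v ag g k = ∑ j ∈ B.toLeft, a j := by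
      intro B ag k h
      rw [sum_split']
      have hz : ∑ x ∈ B.toRight, v ag (inr x) k = 0 := by
        refine Finset.sum_eq_zero fun x hx => ?_
        simp only [hv, Sum.elim_inr]
        exact h x hx
      rw [hz, add_zero]
      simp [hv]
    have hle2T : ∀ B : Finset (Fin n), ∑ j ∈ B, a j ≤ 2 * T := by
      intro B
      rw [← hsum]
      exact Finset.sum_le_sum_of_subset (Finset.subset_univ _)
    rcases eq_or_ne i0 i1 with heq | hne
    · -- both special items at the same agent: contradiction
      exfalso
      subst heq
      obtain ⟨i, hi⟩ : ∃ i : Fin 2, i ≠ i0 := by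
        rcases two 0 i0 (i0 + 1) (by omega) with h | h
        · exact ⟨1, by omega⟩
        · exact ⟨0, by omega⟩
      obtain ⟨X, hXsub, hXcard, hX⟩ := hsef i i0 hi
      have hex : ∃ e : Fin 2, inr e ∈ A i0 ∧ inr e ∉ X := by
        by_contra hc
        push_neg at hc
        have hsub : ({inr 0, inr 1} : Finset (Fin n ⊕ Fin 2)) ⊆ X := by
          intro x hx
          simp only [Finset.mem_insert, Finset.mem_singleton] at hx
          rcases hx with rfl | rfl
          · exact hc 0 h0
          · exact hc 1 h1
        have h2 : 2 ≤ X.card := by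
          have := Finset.card_le_card hsub
          simpa using this
        omega
      obtain ⟨e, heA, heX⟩ := hex
      have hcon := hX e
      have hM1 : M e e = 2 * T + 1 := by fin_cases e <;> simp [hM]
      have hAi : ∑ g ∈ A i, v i g e = ∑ j ∈ (A i).toLeft, a j := by
        refine valeq (A i) i e ?_
        intro x hx
        rw [Finset.mem_toRight] at hx
        exfalso
        have hx' : inr x ∈ A i0 := by
          rcases two x 0 1 (by decide) with rfl | rfl
          · exact h0
          · exact h1
        exact Finset.disjoint_left.mp (hdisj i i0 hi) hx hx'
      have hone : (2 : ℕ) * T + 1 ≤ ∑ g ∈ A i0 \ X, v i g e := by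
        have hmem : inr e ∈ A i0 \ X := Finset.mem_sdiff.mpr ⟨heA, heX⟩
        have := Finset.single_le_sum (f := fun g => v i g e)
          (fun _ _ => Nat.zero_le _) hmem
        calc 2 * T + 1 = v i (inr e) e := by simp [hv, hM1]
          _ ≤ _ := this
      have := hle2T (A i).toLeft
      omega
    · -- the special items are split
      have key : ∀ i i' e e' : Fin 2, i ≠ i' → e ≠ e' →
          inr e ∈ A i → inr e' ∈ A i' →
          ∑ j ∈ (A i').toLeft, a j ≤ ∑ j ∈ (A i).toLeft, a j := by
        intro i i' e e' hii hee hie hie'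
        obtain ⟨X, hXsub, hXcard, hX⟩ := hsef i i' hii
        have hcon := hX e'
        have hM0 : M e e' = 0 := by
          fin_cases e <;> fin_cases e' <;>
            first
              | exact absurd rfl hee
              | simp [hM]
        have hM1 : M e' e' = 2 * T + 1 := by fin_cases e' <;> simp [hM]
        have hAi : ∑ g ∈ A i, v i g e' = ∑ j ∈ (A i).toLeft, a j := by
          refine valeq (A i) i e' ?_
          intro x hx
          rw [Finset.mem_toRight] at hx
          have hxe : x = e := by
            rcases two x e e' hee with h | h
            · exact h
            · subst h
              exact absurd hie' (Finset.disjoint_left.mp (hdisj i i' hii) hx)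
          subst hxe
          exact hM0
        have hin : inr e' ∈ X := by
          by_contra hnx
          have hmem : inr e' ∈ A i' \ X := Finset.mem_sdiff.mpr ⟨hie', hnx⟩
          have hle : v i (inr e') e' ≤ ∑ g ∈ A i' \ X, v i g e' :=
            Finset.single_le_sum (f := fun g => v i g e')
              (fun _ _ => Nat.zero_le _) hmem
          have h1' : 2 * T + 1 ≤ ∑ j ∈ (A i).toLeft, a j := by
            calc 2 * T + 1 = v i (inr e') e' := by simp [hv, hM1]
              _ ≤ ∑ g ∈ A i' \ X, v i g e' := hle
              _ ≤ ∑ g ∈ A i, v i g e' := hcon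
              _ = _ := hAi
          have := hle2T (A i).toLeft
          omega
        have hXsing : X = {inr e'} := by
          apply Finset.eq_singleton_iff_unique_mem.mpr
          exact ⟨hin, fun x hx => Finset.card_le_one.mp hXcard x hx _ hin⟩
        have hLeq : (A i' \ X).toLeft = (A i').toLeft := by
          rw [hXsing, Finset.toLeft_sdiff]
          ext j
          simp
        calc ∑ j ∈ (A i').toLeft, a j
            = ∑ j ∈ (A i' \ X).toLeft, v i (inl j) e' := by
              rw [hLeq]; simp [hv]
          _ ≤ ∑ g ∈ A i' \ X, v i g e' := by
              rw [sum_split']; exact Nat.le_add_right _ _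
          _ ≤ ∑ g ∈ A i, v i g e' := hcon
          _ = _ := hAi
      have k1 := key i0 i1 0 1 hne (by decide) h0 h1
      have k2 := key i1 i0 1 0 hne.symm (by decide) h1 h0
      have hsum2 : ∑ j ∈ (A i0).toLeft, a j + ∑ j ∈ (A i1).toLeft, a j = 2 * T := by
        have hdisjL : Disjoint (A i0).toLeft (A i1).toLeft := by
          rw [Finset.disjoint_left]
          intro j hj hj'
          rw [Finset.mem_toLeft] at hj hj'
          exact Finset.disjoint_left.mp (hdisj i0 i1 hne) hj hj'
        have huniv : (A i0).toLeft ∪ (A i1).toLeft = Finset.univ := by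
          ext j
          simp only [Finset.mem_union, Finset.mem_toLeft, Finset.mem_univ, iff_true]
          obtain ⟨i, hi⟩ := hcov (inl j)
          rcases two i i0 i1 hne with rfl | rfl
          · exact Or.inl hi
          · exact Or.inr hi
        rw [← Finset.sum_union hdisjL, huniv, hsum]
      refine ⟨(A i0).toLeft, by omega, ?_⟩
      have := Finset.sum_add_sum_compl (A i0).toLeft a
      rw [hsum] at this
      omega
  · rintro ⟨S, hS, hSc⟩
    refine ⟨![S.disjSum {0}, Sᶜ.disjSum {1}], ⟨?_, ?_⟩, ?_⟩
    · rintro (j | e)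
      · by_cases hj : j ∈ S
        · exact ⟨0, by simp [hj]⟩
        · exact ⟨1, by simp [hj]⟩
      · fin_cases e
        · exact ⟨0, by simp⟩
        · exact ⟨1, by simp⟩
    · have hd : Disjoint (S.disjSum ({0} : Finset (Fin 2)))
          (Sᶜ.disjSum ({1} : Finset (Fin 2))) := by
        rw [Finset.disjoint_left]
        rintro (j | e) hx hx' <;> simp_all
      intro i i' hii
      fin_cases i <;> fin_cases i' <;>
        simp only [Matrix.cons_val_zero, Matrix.cons_val_one, Matrix.head_cons] <;>
        first
          | exact absurd rfl hii
          | exact hd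
          | exact hd.symm
    · intro i i' hii
      fin_cases i <;> fin_cases i'
      · exact absurd rfl hii
      · -- agent 0 looks at agent 1
        refine ⟨{inr 1}, by simp, by simp, ?_⟩
        intro k
        have hA1 : (![S.disjSum {0}, Sᶜ.disjSum {1}] :
            Fin 2 → Finset (Fin n ⊕ Fin 2)) 1 \ {inr 1} = Sᶜ.disjSum ∅ := by
          ext x
          rcases x with j | e <;> simp
        simp only [Fin.mk_zero, Fin.mk_one, Matrix.cons_val_zero, Matrix.cons_val_one,
          Matrix.head_cons] at hA1 ⊢
        rw [hA1, sum_disjSum', sum_disjSum']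
        simp only [hv, Sum.elim_inl, Sum.elim_inr, Finset.sum_empty, Finset.sum_singleton,
          add_zero, hS, hSc]
        exact Nat.le_add_right _ _
      · -- agent 1 looks at agent 0
        refine ⟨{inr 0}, by simp, by simp, ?_⟩
        intro k
        have hA0 : (![S.disjSum {0}, Sᶜ.disjSum {1}] :
            Fin 2 → Finset (Fin n ⊕ Fin 2)) 0 \ {inr 0} = S.disjSum ∅ := by
          ext x
          rcases x with j | e <;> simp
        simp only [Fin.mk_zero, Fin.mk_one, Matrix.cons_val_zero, Matrix.cons_val_one,
          Matrix.head_cons] at hA0 ⊢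
        rw [hA0, sum_disjSum', sum_disjSum']
        simp only [hv, Sum.elim_inl, Sum.elim_inr, Finset.sum_empty, Finset.sum_singleton,
          add_zero, hS, hSc]
        exact Nat.le_add_right _ _
      · exact absurd rfl hii
end

section
/- Correctness of the reduction from 3-Dimensional Matching to strong sEFc allocation verification: let X, Y, Z be pairwise disjoint sets each of size n, and T ⊆ X × Y × Z a set of triples with |T| > n. Construct the MDFA instance with two identical agents, items M = T ∪ {g*}, dimensions L = X ∪ Y ∪ Z, valuations v(t)_w = 1 if t = (x,y,z) and w ∈ {x,y,z} and v(t)_w = 0 otherwise, and v(g*)_w = 1 for all w ∈ L. Then the allocation A = ({g*}, T) is strong sEF(|T| − n) if and only if there exists a perfect matching T' ⊆ T, i.e., a subset such that every element of X ∪ Y ∪ Z appears in exactly one triple of T'. -/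
lemma sum_option_of_none_notMem {α : Type*} [DecidableEq α] {S : Finset (Option α)}
    (h : none ∉ S) (f : Option α → ℕ) :
    ∑ g ∈ S, f g = ∑ t ∈ S.eraseNone, f (some t) := by
  conv_lhs => rw [← Finset.erase_eq_of_notMem h, ← Finset.image_some_eraseNone S]
  rw [Finset.sum_image (by intro x _ y _ hxy; exact Option.some_injective _ hxy)]

lemma card_eraseNone_of_none_notMem {α : Type*} {S : Finset (Option α)}
    (h : none ∉ S) : S.eraseNone.card = S.card := by
  classical
  have := congrArg Finset.card (Finset.image_some_eraseNone S)
  rwa [Finset.card_image_of_injective _ (Option.some_injective _),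
    Finset.erase_eq_of_notMem h] at this

lemma sum_subtype_count {W : Type*} [DecidableEq W] {T : Finset (W × W × W)}
    (S' : Finset {t // t ∈ T}) (w : W) :
    ∑ t ∈ S', (if w = t.1.1 ∨ w = t.1.2.1 ∨ w = t.1.2.2 then 1 else 0)
      = ((S'.image Subtype.val).filter
          (fun t => w = t.1 ∨ w = t.2.1 ∨ w = t.2.2)).card := by
  rw [Finset.card_filter, Finset.sum_image (fun x _ y _ h => Subtype.val_injective h)]

lemma cover_card_three {W : Type*} [DecidableEq W] {X Y Z : Finset W}
    (hXY : Disjoint X Y) (hXZ : Disjoint X Z) (hYZ : Disjoint Y Z)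
    {t : W × W × W} (h1 : t.1 ∈ X) (h2 : t.2.1 ∈ Y) (h3 : t.2.2 ∈ Z) :
    ((X ∪ Y ∪ Z).filter (fun w => w = t.1 ∨ w = t.2.1 ∨ w = t.2.2)).card = 3 := by
  have hset : (X ∪ Y ∪ Z).filter (fun w => w = t.1 ∨ w = t.2.1 ∨ w = t.2.2)
      = {t.1, t.2.1, t.2.2} := by
    ext w
    simp only [Finset.mem_filter, Finset.mem_union, Finset.mem_insert, Finset.mem_singleton]
    constructor
    · rintro ⟨_, h⟩; exact h
    · rintro (rfl | rfl | rfl)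
      · exact ⟨Or.inl (Or.inl h1), Or.inl rfl⟩
      · exact ⟨Or.inl (Or.inr h2), Or.inr (Or.inl rfl)⟩
      · exact ⟨Or.inr h3, Or.inr (Or.inr rfl)⟩
  have n12 : t.1 ≠ t.2.1 := fun h => (Finset.disjoint_left.mp hXY h1) (h ▸ h2)
  have n13 : t.1 ≠ t.2.2 := fun h => (Finset.disjoint_left.mp hXZ h1) (h ▸ h3)
  have n23 : t.2.1 ≠ t.2.2 := fun h => (Finset.disjoint_left.mp hYZ h2) (h ▸ h3)
  rw [hset, Finset.card_insert_of_notMem (by simp [n12, n13]),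
    Finset.card_insert_of_notMem (by simp [n23]), Finset.card_singleton]

lemma double_count {W : Type*} [DecidableEq W] (D : Finset W) (T'' : Finset (W × W × W)) :
    ∑ w ∈ D, (T''.filter (fun t => w = t.1 ∨ w = t.2.1 ∨ w = t.2.2)).card
      = ∑ t ∈ T'', (D.filter (fun w => w = t.1 ∨ w = t.2.1 ∨ w = t.2.2)).card := by
  simp only [Finset.card_filter]
  exact Finset.sum_comm

/-- Correctness of the reduction from 3-Dimensional Matching to
strong sEFc verification: for pairwise disjoint sets `X, Y, Z` of size `n` and a
set `T ⊆ X × Y × Z` of triples with `|T| > n`, in the two-identical-agent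
instance with items `T ∪ {g*}` (here `none = g*`), dimensions `X ∪ Y ∪ Z`,
valuations `v t w = 1` iff `w` is a coordinate of the triple `t`, and
`v g* w = 1` for all `w`, the allocation `({g*}, T)` is strong sEF`(|T| - n)` iff
`T` contains a perfect matching, i.e. a subset `T'` such that every element of
`X ∪ Y ∪ Z` lies in exactly one triple of `T'`. -/
theorem strong_sEFc_iff_threeDM {W : Type*} [DecidableEq W] (n : ℕ)
    (X Y Z : Finset W) (hXY : Disjoint X Y) (hXZ : Disjoint X Z) (hYZ : Disjoint Y Z)
    (hX : X.card = n) (hY : Y.card = n) (hZ : Z.card = n)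
    (T : Finset (W × W × W)) (hT : ∀ t ∈ T, t.1 ∈ X ∧ t.2.1 ∈ Y ∧ t.2.2 ∈ Z)
    (hTn : n < T.card) :
    (StrongSEF (Dim := {w // w ∈ X ∪ Y ∪ Z})
        (fun (_ : Fin 2) (g : Option {t // t ∈ T}) (w : {w // w ∈ X ∪ Y ∪ Z}) =>
          match g with
          | none => 1
          | some t => if w.1 = t.1.1 ∨ w.1 = t.1.2.1 ∨ w.1 = t.1.2.2 then 1 else 0)
        ![{none}, ({none} : Finset (Option {t // t ∈ T}))ᶜ] (T.card - n)) ↔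
      ∃ T' ⊆ T, ∀ w ∈ X ∪ Y ∪ Z,
        ∃! t : W × W × W, t ∈ T' ∧ (w = t.1 ∨ w = t.2.1 ∨ w = t.2.2) := by
  classical
  set D := X ∪ Y ∪ Z with hD
  have hDcard : D.card = 3 * n := by
    rw [hD, Finset.card_union_of_disjoint (Finset.disjoint_union_left.mpr ⟨hXZ, hYZ⟩),
      Finset.card_union_of_disjoint hXY, hX, hY, hZ]
    ring
  have hcardcompl : (({none} : Finset (Option {t // t ∈ T}))ᶜ).card = T.card := by
    rw [Finset.card_compl, Finset.card_singleton, Fintype.card_option, Fintype.card_coe]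
    simp
  constructor
  · -- forward direction
    intro h
    obtain ⟨S0, hS0sub, hS0card, hS0⟩ := h 0 1 (by decide)
    simp only [Matrix.cons_val_zero, Matrix.cons_val_one, Matrix.head_cons] at hS0sub hS0
    set S : Finset (Option {t // t ∈ T}) := ({none} : Finset (Option {t // t ∈ T}))ᶜ \ S0
      with hSdef
    have hnoneS : none ∉ S := fun hc => by
      simp [hSdef] at hc
    have hScard : n ≤ S.card := by
      rw [hSdef, Finset.card_sdiff_of_subset hS0sub, hcardcompl]
      omega
    set T'' : Finset (W × W × W) := S.eraseNone.image Subtype.val with hT''def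
    have hT''sub : T'' ⊆ T := by
      intro t ht
      rw [hT''def, Finset.mem_image] at ht
      obtain ⟨t', _, rfl⟩ := ht
      exact t'.2
    have hT''card : T''.card = S.card := by
      rw [hT''def, Finset.card_image_of_injective _ Subtype.val_injective,
        card_eraseNone_of_none_notMem hnoneS]
    have hcount : ∀ w ∈ D, (T''.filter (fun t => w = t.1 ∨ w = t.2.1 ∨ w = t.2.2)).card ≤ 1 := by
      intro w hw
      have := hS0 ⟨w, hw⟩
      rw [Finset.sum_singleton] at this
      rw [sum_option_of_none_notMem hnoneS] at this
      rw [hT''def]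
      calc (T''.filter (fun t => w = t.1 ∨ w = t.2.1 ∨ w = t.2.2)).card
          = ∑ t ∈ S.eraseNone, (if w = t.1.1 ∨ w = t.1.2.1 ∨ w = t.1.2.2 then 1 else 0) :=
            (sum_subtype_count S.eraseNone w).symm
        _ ≤ 1 := this
    -- counting
    have hsum : ∑ w ∈ D, (T''.filter (fun t => w = t.1 ∨ w = t.2.1 ∨ w = t.2.2)).card
        = 3 * T''.card := by
      rw [double_count]
      rw [Finset.sum_congr rfl (fun t ht => by
        obtain ⟨h1, h2, h3⟩ := hT t (hT''sub ht)
        exact cover_card_three hXY hXZ hYZ h1 h2 h3)]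
      rw [Finset.sum_const, smul_eq_mul, mul_comm]
    have hle : ∑ w ∈ D, (T''.filter (fun t => w = t.1 ∨ w = t.2.1 ∨ w = t.2.2)).card ≤ 3 * n := by
      calc _ ≤ ∑ _w ∈ D, 1 := Finset.sum_le_sum hcount
        _ = 3 * n := by rw [Finset.sum_const, smul_eq_mul, mul_one, hDcard]
    have hTcard : T''.card = n := by omega
    have heq : ∀ w ∈ D, (T''.filter (fun t => w = t.1 ∨ w = t.2.1 ∨ w = t.2.2)).card = 1 := by
      have h3n : ∑ w ∈ D, (T''.filter (fun t => w = t.1 ∨ w = t.2.1 ∨ w = t.2.2)).card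
          = ∑ _w ∈ D, 1 := by
        rw [hsum, hTcard, Finset.sum_const, smul_eq_mul, mul_one, hDcard]
      exact (Finset.sum_eq_sum_iff_of_le hcount).mp h3n
    refine ⟨T'', hT''sub, fun w hw => ?_⟩
    obtain ⟨t0, ht0⟩ := Finset.card_eq_one.mp (heq w hw)
    have ht0mem : t0 ∈ T''.filter (fun t => w = t.1 ∨ w = t.2.1 ∨ w = t.2.2) := by
      rw [ht0]; exact Finset.mem_singleton_self t0
    rw [Finset.mem_filter] at ht0mem
    refine ⟨t0, ht0mem, fun t' ht' => ?_⟩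
    have : t' ∈ T''.filter (fun t => w = t.1 ∨ w = t.2.1 ∨ w = t.2.2) :=
      Finset.mem_filter.mpr ht'
    rw [ht0] at this
    exact Finset.mem_singleton.mp this
  · -- backward direction
    rintro ⟨T', hT'sub, hpm⟩
    have hcount1 : ∀ w ∈ D, (T'.filter (fun t => w = t.1 ∨ w = t.2.1 ∨ w = t.2.2)).card = 1 := by
      intro w hw
      obtain ⟨t0, ht0, huniq⟩ := hpm w hw
      rw [Finset.card_eq_one]
      refine ⟨t0, ?_⟩
      ext t
      simp only [Finset.mem_filter, Finset.mem_singleton]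
      constructor
      · intro ht; exact huniq t ht
      · rintro rfl; exact ht0
    have hT'card : T'.card = n := by
      have h1 : ∑ w ∈ D, (T'.filter (fun t => w = t.1 ∨ w = t.2.1 ∨ w = t.2.2)).card
          = 3 * T'.card := by
        rw [double_count]
        rw [Finset.sum_congr rfl (fun t ht => by
          obtain ⟨h1, h2, h3⟩ := hT t (hT'sub ht)
          exact cover_card_three hXY hXZ hYZ h1 h2 h3)]
        rw [Finset.sum_const, smul_eq_mul, mul_comm]
      have h2 : ∑ w ∈ D, (T'.filter (fun t => w = t.1 ∨ w = t.2.1 ∨ w = t.2.2)).card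
          = 3 * n := by
        rw [Finset.sum_congr rfl hcount1, Finset.sum_const, smul_eq_mul, mul_one, hDcard]
      omega
    intro i i' hne
    set S' : Finset {t // t ∈ T} := Finset.univ.filter (fun t => t.1 ∈ T') with hS'def
    have himg : S'.image Subtype.val = T' := by
      ext t
      simp only [hS'def, Finset.mem_image, Finset.mem_filter, Finset.mem_univ, true_and]
      constructor
      · rintro ⟨t', ht', rfl⟩; exact ht'
      · intro ht; exact ⟨⟨t, hT'sub ht⟩, ht, rfl⟩
    have hS'card : S'.card = n := by
      rw [← hT'card, ← himg, Finset.card_image_of_injective _ Subtype.val_injective]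
    set S : Finset (Option {t // t ∈ T}) := S'.image some with hSdef
    have hSsub : S ⊆ ({none} : Finset (Option {t // t ∈ T}))ᶜ := by
      intro g hg
      rw [hSdef, Finset.mem_image] at hg
      obtain ⟨t', _, rfl⟩ := hg
      simp
    have hScard : S.card = n := by
      rw [hSdef, Finset.card_image_of_injective _ (Option.some_injective _), hS'card]
    have hsumS : ∀ w (hw : w ∈ D), ∑ g ∈ S,
        (fun (g : Option {t // t ∈ T}) =>
          match g with
          | none => (1 : ℕ)
          | some t => if w = t.1.1 ∨ w = t.1.2.1 ∨ w = t.1.2.2 then 1 else 0) g = 1 := by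
      intro w hw
      rw [hSdef, Finset.sum_image (fun x _ y _ h => Option.some_injective _ h)]
      calc ∑ t ∈ S', (if w = t.1.1 ∨ w = t.1.2.1 ∨ w = t.1.2.2 then 1 else 0)
          = ((S'.image Subtype.val).filter
              (fun t => w = t.1 ∨ w = t.2.1 ∨ w = t.2.2)).card := sum_subtype_count S' w
        _ = 1 := by rw [himg]; exact hcount1 w hw
    -- case analysis on agents
    fin_cases i <;> fin_cases i' <;> simp only [Fin.mk_zero, Fin.mk_one] at hne ⊢
    · exact absurd rfl hne
    · -- i = 0, i' = 1
      refine ⟨({none} : Finset (Option {t // t ∈ T}))ᶜ \ S, ?_, ?_, ?_⟩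
      · simp only [Matrix.cons_val_one, Matrix.head_cons]
        exact Finset.sdiff_subset
      · rw [Finset.card_sdiff_of_subset hSsub, hcardcompl, hScard]
      · intro k
        simp only [Matrix.cons_val_zero, Matrix.cons_val_one, Matrix.head_cons]
        rw [Finset.sdiff_sdiff_eq_self hSsub, Finset.sum_singleton]
        exact le_of_eq (hsumS k.1 k.2)
    · -- i = 1, i' = 0
      refine ⟨{none}, Finset.Subset.refl _, ?_, ?_⟩
      · simp only [Finset.card_singleton]
        omega
      · intro k
        simp only [Matrix.cons_val_zero, Matrix.cons_val_one, Matrix.head_cons,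
          Finset.sdiff_self, Finset.sum_empty]
        exact Nat.zero_le _
    · exact absurd rfl hne
end

section
/- Correctness of the reduction from one-dimensional envy-free existence to strong sEFc existence in nc dimensions: given a one-dimensional instance with agents N = [n], items M = {g_1, …, g_m}, and valuations v_i : M → ℤ_{≥0}, and a positive integer c, construct the MDFA instance with agents N, items M̂ = M ∪ {g_{m+1}, …, g_{m+nc}}, dimensions L̂ = [nc], and valuations v̂_{ijk} = v_{ij} if j ≤ m; v̂_{ijk} = Σ_{j'=1}^m v_{ij'} + 1 if j > m and j − m = k; and v̂_{ijk} = 0 otherwise. Then the constructed instance admits a strong sEFc allocation if and only if the original one-dimensional instance admits an envy-free allocation (i.e., an allocation A with v_i(A_i) ≥ v_i(A_{i'}) for all agents i, i'). -/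
section Aux
open Finset Sum

variable {Item : Type*} [Fintype Item] [DecidableEq Item]

/-- Splitting a sum over a finset of a sum type into left and right parts. -/
lemma sum_toLeft_add_sum_toRight {β : Type*} [DecidableEq β]
    (S : Finset (Item ⊕ β)) (F : Item ⊕ β → ℕ) :
    ∑ g ∈ S, F g = ∑ a ∈ S.toLeft, F (inl a) + ∑ b ∈ S.toRight, F (inr b) := by
  conv_lhs => rw [← Finset.toLeft_disjSum_toRight (u := S)]
  rw [Finset.sum_disjSum]

lemma toLeft_sdiff {β : Type*} [DecidableEq β] (u x : Finset (Item ⊕ β)) :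
    (u \ x).toLeft = u.toLeft \ x.toLeft := by
  ext a; simp

lemma toRight_sdiff {β : Type*} [DecidableEq β] (u x : Finset (Item ⊕ β)) :
    (u \ x).toRight = u.toRight \ x.toRight := by
  ext a; simp

end Aux

/-- Correctness of the reduction from one-dimensional envy-free
existence to strong sEF`c` existence in `n·c` dimensions: given a one-dimensional
instance with `n` agents, items `Item`, valuations `v`, and a positive integer
`c`, the MDFA instance with items `Item ⊕ Fin (n·c)`, dimensions `Fin (n·c)`, and
valuations `v̂ i g k = v i g` for original items `g`, `v̂ i (extra j) k =
(∑ g, v i g) + 1` if `j = k` and `0` otherwise, admits a strong sEF`c` allocation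
iff the original instance admits an envy-free allocation. -/
theorem strong_sEFc_iff_envyFree {Item : Type*} [Fintype Item] [DecidableEq Item]
    (n c : ℕ) (hc : 0 < c) (v : Fin n → Item → ℕ) :
    (∃ B : Fin n → Finset (Item ⊕ Fin (n * c)), IsAllocation B ∧
        StrongSEF (fun (i : Fin n) (g : Item ⊕ Fin (n * c)) (k : Fin (n * c)) =>
          Sum.elim (fun g' => v i g')
            (fun j => if j = k then (∑ g' : Item, v i g') + 1 else 0) g) B c) ↔
      ∃ A : Fin n → Finset Item, IsAllocation A ∧
        ∀ i i' : Fin n, ∑ g ∈ A i', v i g ≤ ∑ g ∈ A i, v i g := by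
  constructor
  · rintro ⟨B, ⟨Bcov, Bdisj⟩, hsef⟩
    -- value of a bundle in dimension k, split
    have sumhat : ∀ (i : Fin n) (S : Finset (Item ⊕ Fin (n * c))) (k : Fin (n * c)),
        (∑ g ∈ S, Sum.elim (fun g' => v i g')
            (fun j => if j = k then (∑ g' : Item, v i g') + 1 else 0) g)
          = ∑ a ∈ S.toLeft, v i a
            + (if k ∈ S.toRight then (∑ g' : Item, v i g') + 1 else 0) := by
      intro i S k
      rw [sum_toLeft_add_sum_toRight]
      simp
    -- any removal set certified by the sEF inequalities must contain all dummies
    have key1 : ∀ p q : Fin n, p ≠ q → ∀ X : Finset (Item ⊕ Fin (n * c)), X ⊆ B q →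
        (∀ k : Fin (n * c),
          (∑ g ∈ B q \ X, Sum.elim (fun g' => v p g')
              (fun j => if j = k then (∑ g' : Item, v p g') + 1 else 0) g)
            ≤ ∑ g ∈ B p, Sum.elim (fun g' => v p g')
              (fun j => if j = k then (∑ g' : Item, v p g') + 1 else 0) g) →
        (B q).toRight ⊆ X.toRight := by
      intro p q hpq X _hX hle
      intro j hj
      by_contra hjX
      have hjmem : j ∈ (B q \ X).toRight := by
        rw [toRight_sdiff]; exact Finset.mem_sdiff.2 ⟨hj, hjX⟩
      have h1 := hle j
      rw [sumhat, sumhat, if_pos hjmem] at h1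
      have hjp : j ∉ (B p).toRight := by
        intro hmem
        exact (Finset.disjoint_left.1 (Bdisj p q hpq)) (Finset.mem_toRight.1 hmem)
          (Finset.mem_toRight.1 hj)
      rw [if_neg hjp] at h1
      have h2 : ∑ a ∈ (B p).toLeft, v p a ≤ ∑ g' : Item, v p g' :=
        Finset.sum_le_sum_of_subset (Finset.subset_univ _)
      omega
    -- n ≥ 2 is only needed when two distinct agents exist; we package what follows
    -- card of dummy sets
    have card_le : ∀ q : Fin n, (∃ p : Fin n, p ≠ q) → ((B q).toRight).card ≤ c := by
      intro q ⟨p, hpq⟩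
      obtain ⟨X, hX1, hX2, hX3⟩ := hsef p q hpq
      have := key1 p q hpq X hX1 hX3
      calc ((B q).toRight).card ≤ X.toRight.card := Finset.card_le_card this
        _ ≤ X.card := Finset.card_toRight_le
        _ ≤ c := hX2
    -- the dummy sets partition Fin (n*c)
    have hbiU : (Finset.univ : Finset (Fin n)).biUnion (fun q => (B q).toRight)
        = Finset.univ := by
      ext j
      simp only [Finset.mem_biUnion, Finset.mem_univ, true_and, iff_true]
      obtain ⟨q, hq⟩ := Bcov (Sum.inr j)
      exact ⟨q, Finset.mem_toRight.2 hq⟩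
    have hsumcard : ∑ q : Fin n, ((B q).toRight).card = n * c := by
      have hdisj' : (↑(Finset.univ : Finset (Fin n)) : Set (Fin n)).PairwiseDisjoint
          (fun q => (B q).toRight) := by
        intro a _ b _ hab
        refine Finset.disjoint_left.2 fun j hja hjb => ?_
        exact (Finset.disjoint_left.1 (Bdisj a b hab)) (Finset.mem_toRight.1 hja)
          (Finset.mem_toRight.1 hjb)
      have := Finset.card_biUnion hdisj'
      rw [hbiU] at this
      simpa [Finset.card_univ] using this.symm
    refine ⟨fun i => (B i).toLeft, ⟨fun g => ?_, fun i i' hne => ?_⟩, ?_⟩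
    · obtain ⟨i, hi⟩ := Bcov (Sum.inl g); exact ⟨i, Finset.mem_toLeft.2 hi⟩
    · exact Finset.disjoint_left.2 fun a ha hb =>
        (Finset.disjoint_left.1 (Bdisj i i' hne)) (Finset.mem_toLeft.1 ha)
          (Finset.mem_toLeft.1 hb)
    · intro i i'
      rcases eq_or_ne i i' with rfl | hne
      · exact le_refl _
      -- every agent's dummy set has cardinality exactly c
      have exists_other : ∀ q : Fin n, ∃ p : Fin n, p ≠ q := by
        intro q
        rcases eq_or_ne q i with rfl | h
        · exact ⟨i', fun h => hne h.symm⟩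
        · exact ⟨i, Ne.symm h⟩
      have card_eq : ∀ q : Fin n, ((B q).toRight).card = c := by
        have hle' : ∀ q ∈ (Finset.univ : Finset (Fin n)),
            ((B q).toRight).card ≤ c := fun q _ => card_le q (exists_other q)
        have hsum' : ∑ q : Fin n, ((B q).toRight).card = ∑ _q : Fin n, c := by
          rw [hsumcard]; simp [Finset.card_univ, mul_comm]
        intro q
        exact (Finset.sum_eq_sum_iff_of_le hle').1 hsum' q (Finset.mem_univ q)
      obtain ⟨X, hX1, hX2, hX3⟩ := hsef i i' hne
      have hsubR : (B i').toRight ⊆ X.toRight := key1 i i' hne X hX1 hX3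
      -- X consists exactly of the dummies of B i'
      have hXleft : X.toLeft = ∅ := by
        have h1 : c ≤ X.toRight.card := by
          have ha := Finset.card_le_card hsubR
          have hb := card_eq i'
          omega
        have h2 := Finset.card_toLeft_add_card_toRight (u := X)
        have : X.toLeft.card = 0 := by omega
        exact Finset.card_eq_zero.1 this
      -- pick a dimension k not among agent i's dummies
      have hn2 : 2 ≤ n := by
        have h1 := i.is_lt
        have h2 := i'.is_lt
        have h3 : i.val ≠ i'.val := fun h => hne (Fin.ext h)
        omega
      have hklt : ((B i).toRight).card < Fintype.card (Fin (n * c)) := by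
        rw [card_eq i, Fintype.card_fin]
        have := Nat.mul_le_mul_right c hn2
        omega
      obtain ⟨k, hk⟩ : ∃ k : Fin (n * c), k ∉ (B i).toRight := by
        by_contra h
        push_neg at h
        have : (Finset.univ : Finset (Fin (n * c))) ⊆ (B i).toRight :=
          fun k _ => h k
        have := Finset.card_le_card this
        rw [Finset.card_univ] at this
        omega
      have h1 := hX3 k
      rw [sumhat, sumhat, if_neg hk] at h1
      have hksdiff : k ∉ (B i' \ X).toRight := by
        rw [toRight_sdiff]
        intro hmem
        exact (Finset.mem_sdiff.1 hmem).2 (hsubR (Finset.mem_sdiff.1 hmem).1)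
      rw [if_neg hksdiff] at h1
      have hLeq : (B i' \ X).toLeft = (B i').toLeft := by
        rw [toLeft_sdiff, hXleft, Finset.sdiff_empty]
      rw [hLeq] at h1
      simpa using h1
  · rintro ⟨A, ⟨Acov, Adisj⟩, hef⟩
    -- dummy block for agent i
    set D : Fin n → Finset (Fin (n * c)) :=
      fun i => Finset.univ.filter (fun j : Fin (n * c) => (j : ℕ) / c = i.val) with hD
    have cardD : ∀ i, (D i).card ≤ c := by
      intro i
      have : (D i).card ≤ (Finset.range c).card := by
        apply Finset.card_le_card_of_injOn (fun j : Fin (n * c) => (j : ℕ) % c)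
        · intro j hj
          exact Finset.mem_range.2 (Nat.mod_lt _ hc)
        · intro j1 hj1 j2 hj2 hmod
          simp only [hD, Finset.mem_coe, Finset.mem_filter] at hj1 hj2
          have hmod' : (j1 : ℕ) % c = (j2 : ℕ) % c := hmod
          apply Fin.ext
          conv_lhs => rw [← Nat.div_add_mod (j1 : ℕ) c]
          conv_rhs => rw [← Nat.div_add_mod (j2 : ℕ) c]
          rw [hj1.2, hj2.2, hmod']
      simpa using this
    refine ⟨fun i => (A i).disjSum (D i), ⟨fun g => ?_, fun i i' hne => ?_⟩, ?_⟩
    · rcases g with a | j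
      · obtain ⟨i, hi⟩ := Acov a
        exact ⟨i, Finset.inl_mem_disjSum.2 hi⟩
      · refine ⟨⟨(j : ℕ) / c, ?_⟩, ?_⟩
        · exact (Nat.div_lt_iff_lt_mul hc).2 (by simpa [mul_comm] using j.is_lt)
        · exact Finset.inr_mem_disjSum.2 (by simp [hD])
    · refine Finset.disjoint_left.2 fun g hg hg' => ?_
      rcases g with a | j
      · rw [Finset.inl_mem_disjSum] at hg hg'
        exact (Finset.disjoint_left.1 (Adisj i i' hne)) hg hg'
      · rw [Finset.inr_mem_disjSum] at hg hg'
        simp only [hD, Finset.mem_filter] at hg hg'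
        exact hne (Fin.ext (hg.2 ▸ hg'.2))
    · intro i i' hne
      refine ⟨(∅ : Finset Item).disjSum (D i'), ?_, ?_, ?_⟩
      · intro g hg
        rcases g with a | j
        · simp at hg
        · rw [Finset.inr_mem_disjSum] at hg ⊢; exact hg
      · rw [Finset.card_disjSum, Finset.card_empty, zero_add]; exact cardD i'
      · intro k
        have hset : (A i').disjSum (D i') \ (∅ : Finset Item).disjSum (D i')
            = (A i').disjSum ∅ := by
          ext g
          rcases g with a | j <;>
            simp [Finset.mem_sdiff, Finset.inl_mem_disjSum, Finset.inr_mem_disjSum]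
        rw [hset]
        simp only [Finset.sum_disjSum, Finset.sum_empty, add_zero]
        calc (∑ a ∈ A i', v i a)
            ≤ ∑ a ∈ A i, v i a := hef i i'
          _ ≤ _ := Nat.le_add_right _ _
end
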